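/- Let G be a second-countable profinite group, μ the normalized Haar probability measure on G, and T : G → G a map. Suppose there exists a metric d on G such that: (i) d induces the topology of G; (ii) d is left translation invariant, i.e. d(gx, gy) = d(x, y) for all x, y, g ∈ G; (iii) T is an isometry with respect to d; and (iv) the collection of open normal subgroups of G that are closed balls centered at the identity with respect to d forms a base of neighborhoods of the identity of G. Then T is a quotient-preserving map and T is measure-preserving with respect to μ. -/

import Mathlib

open MeasureTheory Pointwise

/-- `T` factors through the quotient map `G → G/N`. -/
def MapFactorsThrough {G : Type*} [Group G] (T : G → G) (N : Subgroup G) : Prop :=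
  ∀ x y : G, x⁻¹ * y ∈ N → (T x)⁻¹ * T y ∈ N

/-- `T` is a quotient-preserving map: the open normal subgroups through whose quotient
maps `T` factors contain a base of neighborhoods of the identity. -/
def QuotientPreserving {G : Type*} [Group G] [TopologicalSpace G] (T : G → G) : Prop :=
  ∀ U ∈ nhds (1 : G), ∃ N : Subgroup G,
    N.Normal ∧ IsOpen (N : Set G) ∧ (N : Set G) ⊆ U ∧ MapFactorsThrough T N

theorem stmt5 {G : Type*} [Group G] [TopologicalSpace G] [IsTopologicalGroup G]
    [CompactSpace G] [T2Space G] [TotallyDisconnectedSpace G] [SecondCountableTopology G]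
    [MeasurableSpace G] [BorelSpace G]
    (μ : Measure G) [μ.IsHaarMeasure] [IsProbabilityMeasure μ]
    (T : G → G) (d : G → G → ℝ)
    -- d is a metric
    (hpos : ∀ x y, 0 ≤ d x y)
    (heq : ∀ x y, d x y = 0 ↔ x = y)
    (hsymm : ∀ x y, d x y = d y x)
    (htri : ∀ x y z, d x z ≤ d x y + d y z)
    -- (i) d induces the topology of G
    (htop : ∀ s : Set G, IsOpen s ↔ ∀ x ∈ s, ∃ ε > 0, ∀ y, d x y < ε → y ∈ s)
    -- (ii) d is left translation invariant
    (hinv : ∀ g x y : G, d (g * x) (g * y) = d x y)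
    -- (iii) T is an isometry with respect to d
    (hiso : ∀ x y, d (T x) (T y) = d x y)
    -- (iv) the open normal subgroups that are closed balls about the identity form a
    -- base of neighborhoods of the identity
    (hball : ∀ U ∈ nhds (1 : G), ∃ N : Subgroup G, N.Normal ∧ IsOpen (N : Set G) ∧
      (∃ r : ℝ, 0 < r ∧ (N : Set G) = {x : G | d 1 x ≤ r}) ∧ (N : Set G) ⊆ U) :
    QuotientPreserving T ∧ ∀ S : Set G, MeasurableSet S → μ (T ⁻¹' S) = μ S := by
  -- basic facts about d
  have hdd : ∀ x y : G, d x y = d 1 (x⁻¹ * y) := by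
    intro x y
    have := hinv x 1 (x⁻¹ * y)
    simpa using this
  -- continuity / measurability of T
  have hcont : Continuous T := by
    rw [continuous_def]
    intro s hs
    rw [htop] at hs ⊢
    intro x hx
    obtain ⟨ε, hε, h⟩ := hs (T x) hx
    exact ⟨ε, hε, fun y hy => h (T y) (by rw [hiso]; exact hy)⟩
  have hmeas : Measurable T := hcont.measurable
  -- membership in a ball subgroup
  have hmem : ∀ (N : Subgroup G) (r : ℝ), (N : Set G) = {x | d 1 x ≤ r} →
      ∀ a b : G, (a⁻¹ * b ∈ N ↔ d a b ≤ r) := by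
    intro N r hN a b
    rw [← SetLike.mem_coe, hN, Set.mem_setOf_eq, ← hdd a b]
  have key : ∀ (N : Subgroup G) (r : ℝ), (N : Set G) = {x | d 1 x ≤ r} →
      ∀ x y : G, ((T x)⁻¹ * T y ∈ N ↔ x⁻¹ * y ∈ N) := by
    intro N r hN x y
    rw [hmem N r hN, hmem N r hN, hiso]
  -- quotient preserving
  have hQP : QuotientPreserving T := by
    intro U hU
    obtain ⟨N, hNorm, hOpen, ⟨r, hr, hNr⟩, hsub⟩ := hball U hU
    exact ⟨N, hNorm, hOpen, hsub, fun x y hxy => (key N r hNr x y).2 hxy⟩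
  -- ball subgroups are open
  have ballOpen : ∀ (N : Subgroup G) (r : ℝ), 0 < r → (N : Set G) = {x | d 1 x ≤ r} →
      IsOpen (N : Set G) := by
    intro N r hr hN
    rw [htop]
    intro x hx
    refine ⟨r, hr, fun y hy => ?_⟩
    have h1 : x⁻¹ * y ∈ N := (hmem N r hN x y).2 hy.le
    have h2 : x ∈ N := hx
    simpa using N.mul_mem h2 h1
  -- preimage of a coset is a coset
  have preimage_coset : ∀ (N : Subgroup G) (r : ℝ), 0 < r →
      (N : Set G) = {x | d 1 x ≤ r} → ∀ g : G,
      ∃ y : G, T ⁻¹' (g • (N : Set G)) = y • (N : Set G) := by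
    intro N r hr hN g
    have hfin : Finite (G ⧸ N) := N.quotient_finite_of_isOpen (ballOpen N r hr hN)
    -- the induced map on the quotient
    let f : G ⧸ N → G ⧸ N := Quotient.map' T (by
      intro a b hab
      rw [QuotientGroup.leftRel_apply] at hab ⊢
      exact (key N r hN a b).2 hab)
    have hfinj : Function.Injective f := by
      intro a b
      induction a using Quotient.inductionOn'
      induction b using Quotient.inductionOn'
      rename_i a b
      intro hab
      have : (T a)⁻¹ * T b ∈ N := by
        rwa [← QuotientGroup.leftRel_apply, ← Quotient.eq'']
      have := (key N r hN a b).1 this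
      rw [← QuotientGroup.leftRel_apply] at this
      exact Quotient.sound' this
    have hfsurj : Function.Surjective f := Finite.surjective_of_injective hfinj
    obtain ⟨q, hq⟩ := hfsurj (QuotientGroup.mk g)
    induction q using Quotient.inductionOn'
    rename_i y
    refine ⟨y, ?_⟩
    have hTy : (T y)⁻¹ * g ∈ N := by
      have : (QuotientGroup.mk (T y) : G ⧸ N) = QuotientGroup.mk g := hq
      rwa [QuotientGroup.eq] at this
    ext z
    simp only [Set.mem_preimage, Set.mem_smul_set_iff_inv_smul_mem, smul_eq_mul]
    constructor
    · intro hz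
      have h1 : (T y)⁻¹ * T z ∈ N := by
        have := N.mul_mem hTy hz
        simpa [mul_assoc] using this
      exact (key N r hN y z).1 h1
    · intro hz
      have h1 : (T y)⁻¹ * T z ∈ N := (key N r hN y z).2 hz
      have := N.mul_mem (N.inv_mem hTy) h1
      simpa [mul_assoc] using this
  -- the π-system of cosets of ball subgroups
  set C : Set (Set G) := {s | ∃ (N : Subgroup G) (g : G) (r : ℝ),
    0 < r ∧ (N : Set G) = {x | d 1 x ≤ r} ∧ s = g • (N : Set G)} with hC
  have memcoset : ∀ (N : Subgroup G) (g z : G), z ∈ g • (N : Set G) ↔ g⁻¹ * z ∈ N := by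
    intro N g z
    simp [Set.mem_smul_set_iff_inv_smul_mem]
  have coset_eq : ∀ (N : Subgroup G) (g z : G), z ∈ g • (N : Set G) →
      g • (N : Set G) = z • (N : Set G) := by
    intro N g z hz
    rw [memcoset] at hz
    ext w
    rw [memcoset, memcoset]
    constructor
    · intro hw
      have := N.mul_mem (N.inv_mem hz) hw
      simpa [mul_assoc] using this
    · intro hw
      have := N.mul_mem hz hw
      simpa [mul_assoc] using this
  have hpi : IsPiSystem C := by
    rintro s ⟨N, g, r, hr, hN, rfl⟩ t ⟨M, h, r', hr', hM, rfl⟩ hne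
    obtain ⟨z, hz1, hz2⟩ := hne
    rcases le_total r r' with hrr | hrr
    · refine ⟨N, z, r, hr, hN, ?_⟩
      rw [coset_eq N g z hz1, coset_eq M h z hz2]
      ext w
      rw [Set.mem_inter_iff, memcoset, memcoset]
      refine ⟨fun hw => hw.1, fun hw => ⟨hw, ?_⟩⟩
      rw [hmem N r hN] at hw
      rw [hmem M r' hM]
      linarith
    · refine ⟨M, z, r', hr', hM, ?_⟩
      rw [coset_eq N g z hz1, coset_eq M h z hz2]
      ext w
      rw [Set.mem_inter_iff, memcoset, memcoset]
      refine ⟨fun hw => hw.2, fun hw => ⟨?_, hw⟩⟩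
      rw [hmem M r' hM] at hw
      rw [hmem N r hN]
      linarith
  have hCopen : ∀ s ∈ C, IsOpen s := by
    rintro s ⟨N, g, r, hr, hN, rfl⟩
    exact (ballOpen N r hr hN).smul g
  -- C generates the Borel σ-algebra
  have hgen : ‹MeasurableSpace G› = MeasurableSpace.generateFrom C := by
    rw [BorelSpace.measurable_eq (α := G), borel]
    apply le_antisymm
    · apply MeasurableSpace.generateFrom_le
      intro U hU
      -- for each x in U pick a coset x • N ⊆ U
      have hx : ∀ x : U, ∃ s : Set G, s ∈ C ∧ (x : G) ∈ s ∧ s ⊆ U := by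
        rintro ⟨x, hxU⟩
        have hV : (fun y => x * y) ⁻¹' U ∈ nhds (1 : G) := by
          apply IsOpen.mem_nhds
          · exact hU.preimage (continuous_mul_left x)
          · simpa using hxU
        obtain ⟨N, -, -, ⟨r, hr, hNr⟩, hsub⟩ := hball _ hV
        refine ⟨x • (N : Set G), ⟨N, x, r, hr, hNr, rfl⟩, ?_, ?_⟩
        · rw [memcoset]; simpa using N.one_mem
        · intro w hw
          rw [memcoset] at hw
          have := hsub hw
          simpa using this
      choose s hsC hxs hsU using hx
      have hUeq : U = ⋃ x : U, s x := by
        apply Set.Subset.antisymm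
        · intro x hxU
          exact Set.mem_iUnion.2 ⟨⟨x, hxU⟩, hxs ⟨x, hxU⟩⟩
        · exact Set.iUnion_subset fun x => hsU x
      obtain ⟨t, htc, hteq⟩ := TopologicalSpace.isOpen_iUnion_countable s
        (fun x => hCopen _ (hsC x))
      rw [hUeq, ← hteq]
      exact MeasurableSet.biUnion htc fun i _ =>
        MeasurableSpace.measurableSet_generateFrom (hsC i)
    · apply MeasurableSpace.generateFrom_le
      intro s hs
      exact MeasurableSpace.measurableSet_generateFrom (hCopen s hs)
  -- the pushforward measure equals μ
  have hmap : μ.map T = μ := by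
    have hpm : IsProbabilityMeasure (μ.map T) := Measure.isProbabilityMeasure_map hmeas.aemeasurable
    refine MeasureTheory.ext_of_generate_finite C hgen hpi ?_ (by simp)
    rintro s ⟨N, g, r, hr, hN, rfl⟩
    rw [Measure.map_apply hmeas]
    · obtain ⟨y, hy⟩ := preimage_coset N r hr hN g
      rw [hy, measure_smul, measure_smul]
    · rw [hgen]
      exact MeasurableSpace.measurableSet_generateFrom ⟨N, g, r, hr, hN, rfl⟩
  refine ⟨hQP, fun S hS => ?_⟩
  rw [← Measure.map_apply hmeas hS, hmap]
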